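/- Let m be a positive integer, D the m×m cyclic-shift permutation matrix, B = Dᵗ, U(r) the m×m matrix whose r-th row consists of 1's and is 0 elsewhere. Then (B − I + U(1))·(D − I + U(1)) = 2I − B − D + U(2), and consequently det(2I − B − D + U(2)) = m². -/

import Mathlib

open Matrix Finset

section
variable {n : ℕ}

lemma shift_iff {i k : Fin (n+1)} : (i = k + 1) ↔ (k = i - 1) := by
  rw [eq_comm, eq_sub_iff_add_eq, eq_comm]

lemma shift_iff' {i k : Fin (n+1)} : (k + 1 = i) ↔ (k = i - 1) := by
  rw [eq_comm (a := k + 1), shift_iff]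

theorem part1 (D B : Matrix (Fin (n+1)) (Fin (n+1)) ℚ)
    (hD : D = Matrix.of fun i j => if j = i + 1 then 1 else 0)
    (hB : B = D.transpose)
    (U : Fin (n+1) → Matrix (Fin (n+1)) (Fin (n+1)) ℚ)
    (hU : U = fun r => Matrix.of fun i _ => if i = r then 1 else 0) :
    (B - 1 + U 0) * (D - 1 + U 0) = (2 : ℚ) • 1 - B - D + U 1 := by
  subst hD hB hU
  set D : Matrix (Fin (n+1)) (Fin (n+1)) ℚ := Matrix.of fun i j => if j = i + 1 then 1 else 0 with hD
  simp only
  set U0 : Matrix (Fin (n+1)) (Fin (n+1)) ℚ := Matrix.of fun i _ => if i = (0:Fin (n+1)) then 1 else 0 with hU0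
  set U1 : Matrix (Fin (n+1)) (Fin (n+1)) ℚ := Matrix.of fun i _ => if i = (1:Fin (n+1)) then 1 else 0 with hU1
  have hBD : D.transpose * D = 1 := by
    ext i j
    simp only [Matrix.mul_apply, Matrix.transpose_apply, hD, Matrix.of_apply, ite_mul, one_mul,
      zero_mul, Matrix.one_apply, shift_iff, shift_iff']
    rw [Finset.sum_ite_eq' Finset.univ (i - 1)]
    by_cases h : i = j <;> simp [h]
  have hBU : D.transpose * U0 = U1 := by
    ext i j
    simp only [Matrix.mul_apply, Matrix.transpose_apply, hD, hU0, hU1, Matrix.of_apply, ite_mul,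
      one_mul, zero_mul, mul_ite, mul_one, mul_zero]
    rw [Finset.sum_ite_eq' Finset.univ (0 : Fin (n+1)) (fun k => if i = k + 1 then (1:ℚ) else 0)]
    simp [zero_add]
  have hUD : U0 * D = U0 := by
    ext i j
    simp only [Matrix.mul_apply, hD, hU0, Matrix.of_apply, mul_ite, mul_one, mul_zero, shift_iff]
    by_cases h : i = 0 <;> simp [h, Finset.sum_ite_eq' Finset.univ (j - 1)]
  have hUU : U0 * U0 = U0 := by
    ext i j
    simp only [Matrix.mul_apply, hU0, Matrix.of_apply, ite_mul, one_mul, zero_mul, mul_ite,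
      mul_one, mul_zero]
    by_cases h : i = 0 <;> simp [h, Finset.sum_ite_eq' Finset.univ (0 : Fin (n+1))]
  have expand : (D.transpose - 1 + U0) * (D - 1 + U0) =
      D.transpose * D - D.transpose + D.transpose * U0 - D + 1 - U0 + U0 * D - U0 + U0 * U0 := by
    noncomm_ring
  rw [expand, hBD, hBU, hUD, hUU]
  have h2 : (2 : ℚ) • (1 : Matrix (Fin (n+1)) (Fin (n+1)) ℚ) = 1 + 1 := by
    rw [two_smul]
  rw [h2]
  abel


section
variable (n : ℕ)

def Gm : Matrix (Fin (n+2)) (Fin (n+2)) ℚ :=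
  Matrix.of (fun i j => if j = i + 1 then 1 else 0) - 1 +
    Matrix.of fun i _ => if i = 0 then 1 else 0

def Sm : Matrix (Fin (n+2)) (Fin (n+2)) ℚ := Matrix.of fun j k => if j ≤ k then 1 else 0

def Tm : Matrix (Fin (n+2)) (Fin (n+2)) ℚ :=
  Matrix.of fun i k =>
    if (i : ℕ) = 0 then (if (k : ℕ) = 0 then 0 else ((k : ℕ) : ℚ) + 1)
    else if (i : ℕ) = n + 1 then (if (k : ℕ) = n + 1 then 0 else 1)
    else if (k : ℕ) = (i : ℕ) then -1 else 0

lemma GS_eq : Gm n * Sm n = Tm n := by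
  ext i k
  rw [Matrix.mul_apply]
  simp only [Gm, Sm, Tm, Matrix.sub_apply, Matrix.add_apply, Matrix.one_apply, Matrix.of_apply]
  have expand : ∀ j : Fin (n+2),
      ((if j = i + 1 then (1:ℚ) else 0) - (if i = j then 1 else 0) + (if i = 0 then 1 else 0)) *
        (if j ≤ k then 1 else 0) =
      (if j = i + 1 then (1:ℚ) else 0) * (if j ≤ k then 1 else 0)
        - (if j = i then 1 else 0) * (if j ≤ k then 1 else 0)
        + (if i = 0 then 1 else 0) * (if j ≤ k then 1 else 0) := by
    intro j
    by_cases h : i = j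
    · subst h; split_ifs <;> ring
    · rw [if_neg h, if_neg (show ¬ j = i from fun hh => h hh.symm)]; ring
  rw [Finset.sum_congr rfl fun j _ => expand j]
  rw [Finset.sum_add_distrib, Finset.sum_sub_distrib]
  rw [← Finset.mul_sum]
  have s1 : (∑ j : Fin (n+2), (if j = i + 1 then (1:ℚ) else 0) * (if j ≤ k then 1 else 0))
      = if i + 1 ≤ k then 1 else 0 := by
    simp only [ite_mul, one_mul, zero_mul]
    rw [Finset.sum_ite_eq' Finset.univ (i+1) (fun j => if j ≤ k then (1:ℚ) else 0)]
    simp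
  have s2 : (∑ j : Fin (n+2), (if j = i then (1:ℚ) else 0) * (if j ≤ k then 1 else 0))
      = if i ≤ k then 1 else 0 := by
    simp only [ite_mul, one_mul, zero_mul]
    rw [Finset.sum_ite_eq' Finset.univ i (fun j => if j ≤ k then (1:ℚ) else 0)]
    simp
  have s3 : (∑ j : Fin (n+2), (if j ≤ k then (1:ℚ) else 0)) = (k : ℕ) + 1 := by
    rw [Finset.sum_boole]
    have : Finset.filter (fun j : Fin (n+2) => j ≤ k) Finset.univ = Finset.Iic k := by
      ext j; simp
    rw [this, Fin.card_Iic]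
    push_cast; ring
  rw [s1, s2, s3]
  have hv : ((i+1 : Fin (n+2)):ℕ) = if (i:ℕ) = n+1 then 0 else (i:ℕ)+1 := by
    rw [Fin.val_add_one]
    by_cases h : i = Fin.last (n+1)
    · simp [h]
    · rw [if_neg h, if_neg (by simpa [Fin.ext_iff] using h)]
  have hi := i.isLt
  have hk := k.isLt
  by_cases hlast : (i:ℕ) = n + 1
  · have hv' : ((i+1 : Fin (n+2)):ℕ) = 0 := by rw [hv, if_pos hlast]
    simp only [Fin.le_def, hv', Fin.ext_iff, Fin.val_zero]
    split_ifs <;> push_cast <;> try ring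
    all_goals first | (exfalso; omega) | simp_all
  · have hv' : ((i+1 : Fin (n+2)):ℕ) = (i:ℕ)+1 := by rw [hv, if_neg hlast]
    simp only [Fin.le_def, hv', Fin.ext_iff, Fin.val_zero]
    split_ifs <;> push_cast <;> try ring
    all_goals first | (exfalso; omega) | simp_all

lemma det_Sm : (Sm n).det = 1 := by
  have h : (Sm n).BlockTriangular id := by
    intro i j hij
    simp only [Sm, Matrix.of_apply]
    exact if_neg (not_le.mpr hij)
  rw [Matrix.det_of_upperTriangular h]
  simp [Sm]

def cperm : Equiv.Perm (Fin (n+2)) :=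
  Equiv.swap (0 : Fin (n+2)) (Fin.last (n+1)) * finRotate (n+2)

lemma cperm_val (b : Fin (n+2)) :
    (((cperm n) b : Fin (n+2)) : ℕ) =
      if (b:ℕ) = n+1 then n+1 else if (b:ℕ) = n then 0 else (b:ℕ)+1 := by
  have hb := b.isLt
  simp only [cperm, Equiv.Perm.mul_apply, finRotate_succ_apply]
  rcases eq_or_ne (b:ℕ) (n+1) with h | h
  · have hbl : b = Fin.last (n+1) := by simp [Fin.ext_iff, h]
    rw [hbl, Fin.last_add_one, Equiv.swap_apply_left]
    simp [h]
  · have h1 : ((b+1 : Fin (n+2)):ℕ) = (b:ℕ)+1 := by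
      rw [Fin.val_add_one, if_neg (by simp [Fin.ext_iff]; omega)]
    rcases eq_or_ne (b:ℕ) n with h2 | h2
    · have : b + 1 = Fin.last (n+1) := by simp [Fin.ext_iff, h1, h2]
      rw [this, Equiv.swap_apply_right]
      simp [h, h2]
    · have hne0 : b + 1 ≠ 0 := by rw [Ne, Fin.ext_iff, h1, Fin.val_zero]; omega
      have hnel : b + 1 ≠ Fin.last (n+1) := by simp [Fin.ext_iff, h1]; omega
      rw [Equiv.swap_apply_of_ne_of_ne hne0 hnel]
      simp [h, h2, h1]

lemma rperm_val (a : Fin (n+2)) :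
    ((finRotate (n+2) a : Fin (n+2)) : ℕ) = if (a:ℕ) = n+1 then 0 else (a:ℕ)+1 := by
  rw [finRotate_succ_apply, Fin.val_add_one]
  rcases eq_or_ne (a:ℕ) (n+1) with h | h
  · rw [if_pos (by simp [Fin.ext_iff, h]), if_pos h]
  · rw [if_neg (by simp [Fin.ext_iff]; omega), if_neg h]

def Nm : Matrix (Fin (n+2)) (Fin (n+2)) ℚ := (Tm n).submatrix (finRotate (n+2)) (cperm n)

lemma Nm_tri : (Nm n).BlockTriangular OrderDual.toDual := by
  intro a b hab
  have hab' : (a:ℕ) < (b:ℕ) := hab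
  have ha := a.isLt
  have hb := b.isLt
  simp only [Nm, Matrix.submatrix_apply, Tm, Matrix.of_apply]
  rw [rperm_val, cperm_val]
  split_ifs <;> first | rfl | contradiction | (exfalso; omega)

lemma Nm_diag (a : Fin (n+2)) :
    Nm n a a = if (a:ℕ) < n then -1 else if (a:ℕ) = n then 1 else (n:ℚ)+2 := by
  have ha := a.isLt
  simp only [Nm, Matrix.submatrix_apply, Tm, Matrix.of_apply]
  rw [rperm_val, cperm_val]
  split_ifs <;> first | rfl | contradiction | (exfalso; omega) | (push_cast; ring)

lemma Nm_det : (Nm n).det = (-1)^n * ((n:ℚ)+2) := by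
  rw [Matrix.det_of_lowerTriangular _ (Nm_tri n)]
  rw [Finset.prod_congr rfl fun a _ => Nm_diag n a]
  rw [Fin.prod_univ_castSucc]
  have hlast : (if ((Fin.last (n+1) : Fin (n+2)):ℕ) < n then (-1:ℚ)
      else if ((Fin.last (n+1) : Fin (n+2)):ℕ) = n then 1 else (n:ℚ)+2) = (n:ℚ)+2 := by
    rw [Fin.val_last, if_neg (by omega), if_neg (by omega)]
  rw [hlast]
  have hinner : ∀ a : Fin (n+1),
      (if ((a.castSucc : Fin (n+2)):ℕ) < n then (-1:ℚ)
        else if ((a.castSucc : Fin (n+2)):ℕ) = n then 1 else (n:ℚ)+2) =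
      (if (a:ℕ) < n then (-1:ℚ) else 1) := by
    intro a
    have := a.isLt
    rw [Fin.coe_castSucc]
    split_ifs <;> first | rfl | omega
  rw [Finset.prod_congr rfl fun a _ => hinner a]
  rw [Fin.prod_univ_castSucc]
  have h2 : (if ((Fin.last n : Fin (n+1)):ℕ) < n then (-1:ℚ) else 1) = 1 := by
    rw [Fin.val_last, if_neg (by omega)]
  rw [h2]
  have h3 : ∀ a : Fin n, (if ((a.castSucc : Fin (n+1)):ℕ) < n then (-1:ℚ) else 1) = -1 := by
    intro a; rw [Fin.coe_castSucc, if_pos a.isLt]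
  rw [Finset.prod_congr rfl fun a _ => h3 a]
  simp

lemma sq_det_Gm : (Gm n).det ^ 2 = ((n:ℚ)+2)^2 := by
  have hGT : (Gm n).det = (Tm n).det := by
    rw [← GS_eq, Matrix.det_mul, det_Sm, mul_one]
  have hsub : Nm n = ((Tm n).submatrix id (cperm n)).submatrix (finRotate (n+2)) id := rfl
  have hdet : (Nm n).det =
      (Equiv.Perm.sign (finRotate (n+2)) : ℚ) * ((Equiv.Perm.sign (cperm n) : ℚ) * (Tm n).det) := by
    rw [hsub, Matrix.det_permute, Matrix.det_permute']
  have hsq : ∀ u : Equiv.Perm (Fin (n+2)), ((Equiv.Perm.sign u : ℤ) : ℚ)^2 = 1 := by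
    intro u
    rcases Int.units_eq_one_or (Equiv.Perm.sign u) with h | h <;> simp [h]
  have := congrArg (fun x : ℚ => x^2) hdet
  simp only [mul_pow] at this
  rw [hsq, hsq, Nm_det] at this
  rw [hGT]
  have h4 : ((-1:ℚ)^n * ((n:ℚ)+2))^2 = ((n:ℚ)+2)^2 := by
    rw [mul_pow, ← pow_mul, pow_mul']
    simp
  rw [h4] at this
  linarith [this]

def Fm : Matrix (Fin (n+2)) (Fin (n+2)) ℚ :=
  (Matrix.of (fun i j => if j = i + 1 then 1 else 0)).transpose - 1 +
    Matrix.of fun i _ => if i = 0 then 1 else 0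

lemma Fm_eq : Fm n = (Gm n).submatrix (Equiv.neg (Fin (n+2))) (Equiv.neg (Fin (n+2))) := by
  ext i j
  simp only [Fm, Gm, Matrix.submatrix_apply, Equiv.neg_apply, Matrix.sub_apply, Matrix.add_apply,
    Matrix.one_apply, Matrix.of_apply, Matrix.transpose_apply]
  have h1 : (i = j + 1) ↔ ((-j : Fin (n+2)) = -i + 1) := by
    constructor <;> intro h
    · rw [h]; abel
    · calc i = -(-i + 1) + 1 := by abel
        _ = -(-j) + 1 := by rw [h]
        _ = j + 1 := by abel
  have h2 : (i = j) ↔ ((-i : Fin (n+2)) = -j) := by rw [neg_inj, eq_comm]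
  have h3 : (i = 0) ↔ ((-i : Fin (n+2)) = 0) := by rw [neg_eq_zero]
  simp only [h1, h2, h3]

lemma det_Fm : (Fm n).det = (Gm n).det := by
  rw [Fm_eq, Matrix.det_submatrix_equiv_self]

end

/-- `(B − I + U(1))·(D − I + U(1)) = 2I − B − D + U(2)` and hence
`det (2I − B − D + U(2)) = m²`, where `D` is the m×m cyclic shift matrix,
`B = Dᵗ`, and `U(r)` has all entries `1` in row `r` and `0` elsewhere
(rows being indexed by `Fin m`, so row 1 is index `0` and row 2 is index `1`). -/
theorem stmt_3 (m : ℕ) [NeZero m]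
    (D : Matrix (Fin m) (Fin m) ℚ)
    (hD : D = Matrix.of fun i j => if j = i + 1 then 1 else 0)
    (B : Matrix (Fin m) (Fin m) ℚ) (hB : B = D.transpose)
    (U : Fin m → Matrix (Fin m) (Fin m) ℚ)
    (hU : U = fun r => Matrix.of fun i _ => if i = r then 1 else 0) :
    (B - 1 + U 0) * (D - 1 + U 0) = (2 : ℚ) • 1 - B - D + U 1 ∧
      ((2 : ℚ) • 1 - B - D + U 1).det = (m : ℚ) ^ 2 := by
  obtain ⟨k, rfl⟩ : ∃ k, m = k + 1 := ⟨m - 1, by have := NeZero.ne m; omega⟩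
  refine ⟨part1 D B hD hB U hU, ?_⟩
  have h1 : ((2:ℚ) • 1 - B - D + U 1) = (B - 1 + U 0) * (D - 1 + U 0) :=
    (part1 D B hD hB U hU).symm
  rw [h1, Matrix.det_mul]
  subst hB hD hU
  rcases k with _ | n
  · haveI : Subsingleton (Fin (0+1)) := ⟨fun a b => by omega⟩
    have h00 : (0 + 1 : Fin (0+1)) = 0 := rfl
    rw [Matrix.det_eq_elem_of_subsingleton _ 0, Matrix.det_eq_elem_of_subsingleton _ 0]
    norm_num [Matrix.sub_apply, Matrix.add_apply, Matrix.one_apply, Matrix.transpose_apply,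
      Matrix.of_apply, h00]
  · have hX : ((Matrix.of fun i j : Fin (n+2) => if j = i + 1 then (1:ℚ) else 0).transpose - 1 +
        (fun r : Fin (n+2) => Matrix.of fun i _ : Fin (n+2) => if i = r then (1:ℚ) else 0) 0)
        = Fm n := rfl
    have hY : (Matrix.of (fun i j : Fin (n+2) => if j = i + 1 then (1:ℚ) else 0) - 1 +
        (fun r : Fin (n+2) => Matrix.of fun i _ : Fin (n+2) => if i = r then (1:ℚ) else 0) 0)
        = Gm n := rfl
    rw [hX, hY, det_Fm, ← sq, sq_det_Gm]
    push_cast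
    ring
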